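/- arXiv:1612.04752 — 4 statements merged into one kernel-verified Lean document; each statement's English description precedes it below -/
import Mathlib

section
/- Let U ⊆ ℂ² be open, K ⊆ U compact and convex, and Φ : U → ℂ² holomorphic such that for every p ∈ U the derivative DΦ(p) is symplectic, i.e. ω(DΦ(p)u, DΦ(p)v) = ω(u,v) for all u,v ∈ ℂ². Let c ∈ ℝ, s₀ > 0, M > 0, let Ω ⊆ ℂ be an open set containing the ray {c − i s : s ≥ s₀}, and let W⁺, W⁻ : Ω → ℂ² be holomorphic with W⁺(c − i s), W⁻(c − i s) ∈ K for all s ≥ s₀. Set δ₀ = W⁺ − W⁻ and assume ‖δ₀(c − i s)‖ ≤ M e^{−2π s} and ‖(W⁻)'(c − i s)‖ ≤ M for all s ≥ s₀, and that the limit θ_F := lim_{s→∞} e^{2π i (c − i s)} ω(δ₀(c − i s), (W⁻)'(c − i s)) exists. Define V^±(t) = Φ(W^±(t + c)). Then the limit lim_{s→∞} e^{2π i(−i s)} ω(V⁺(−i s) − V⁻(−i s), (V⁻)'(−i s)) exists and equals e^{−2π i c} θ_F; in particular its absolute value equals |θ_F|. -/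
open Filter Metric

/-- The standard symplectic form on `ℂ²`: `ω(u,v) = u₁v₂ − u₂v₁`. -/
noncomputable def symp (u v : ℂ × ℂ) : ℂ := u.1 * v.2 - u.2 * v.1

lemma symp_add_left (u w v : ℂ × ℂ) : symp (u + w) v = symp u v + symp w v := by
  simp [symp]; ring

lemma norm_symp_le (u v : ℂ × ℂ) : ‖symp u v‖ ≤ 2 * (‖u‖ * ‖v‖) := by
  have h1 : ‖u.1 * v.2‖ ≤ ‖u‖ * ‖v‖ := by
    rw [norm_mul]
    exact mul_le_mul (norm_fst_le u) (norm_snd_le v) (norm_nonneg _) (norm_nonneg _)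
  have h2 : ‖u.2 * v.1‖ ≤ ‖u‖ * ‖v‖ := by
    rw [norm_mul]
    exact mul_le_mul (norm_snd_le u) (norm_fst_le v) (norm_nonneg _) (norm_nonneg _)
  calc ‖u.1 * v.2 - u.2 * v.1‖
      ≤ ‖u.1 * v.2‖ + ‖u.2 * v.1‖ := by
        exact norm_sub_le _ _
    _ ≤ 2 * (‖u‖ * ‖v‖) := by linarith

lemma max_principle {f : ℂ → ℂ × ℂ} {R C : ℝ} (hR : 0 < R)
    (hf : DifferentiableOn ℂ f (closedBall 0 R))
    (hC : ∀ z ∈ sphere (0:ℂ) R, ‖f z‖ ≤ C)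
    {z : ℂ} (hz : z ∈ closedBall (0:ℂ) R) : ‖f z‖ ≤ C := by
  have hd : DiffContOnCl ℂ f (ball 0 R) :=
    ⟨hf.mono ball_subset_closedBall, by
      rw [closure_ball (0:ℂ) hR.ne']; exact hf.continuousOn⟩
  refine Complex.norm_le_of_forall_mem_frontier_norm_le isBounded_ball hd ?_ ?_
  · intro w hw
    exact hC w (by rwa [frontier_ball (0:ℂ) hR.ne'] at hw)
  · rwa [closure_ball (0:ℂ) hR.ne']

lemma cauchy_key {V : Set (ℂ × ℂ)} (hV : IsOpen V) {Φ : ℂ × ℂ → ℂ × ℂ}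
    (hΦ : DifferentiableOn ℂ Φ V) {b : ℂ × ℂ} {r B : ℝ} (hr : 0 < r) (hB : 0 ≤ B)
    (hsub : ∀ x : ℂ × ℂ, ‖x - b‖ ≤ r → x ∈ V)
    (hbd : ∀ x : ℂ × ℂ, ‖x - b‖ ≤ r → ‖Φ x‖ ≤ B) (w : ℂ × ℂ) :
    ‖fderiv ℂ Φ b w‖ ≤ 2 * B / r * ‖w‖ ∧
    (‖w‖ ≤ r → ‖Φ (b + w) - Φ b - fderiv ℂ Φ b w‖ ≤ 4 * B / r ^ 2 * ‖w‖ ^ 2) := by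
  have hbV : b ∈ V := hsub b (by simpa using hr.le)
  rcases eq_or_ne w 0 with rfl | hw
  · constructor
    · simp [(ContinuousLinearMap.map_zero _)]
    · intro _
      simp [(ContinuousLinearMap.map_zero _)]
  · have hwn : (0:ℝ) < ‖w‖ := norm_pos_iff.mpr hw
    set R : ℝ := r / ‖w‖ with hRdef
    have hR : 0 < R := div_pos hr hwn
    have hmem : ∀ z : ℂ, z ∈ closedBall (0:ℂ) R → ‖(b + z • w) - b‖ ≤ r := by
      intro z hz
      have : ‖z‖ ≤ R := by simpa using mem_closedBall_zero_iff.mp hz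
      calc ‖(b + z • w) - b‖ = ‖z‖ * ‖w‖ := by rw [add_sub_cancel_left, norm_smul]
        _ ≤ R * ‖w‖ := by gcongr
        _ = r := div_mul_cancel₀ r hwn.ne'
    set F : ℂ → ℂ × ℂ := fun z => Φ (b + z • w) with hFdef
    have hF : DifferentiableOn ℂ F (closedBall 0 R) := by
      intro z hz
      have hx : b + z • w ∈ V := hsub _ (hmem z hz)
      have h1 : DifferentiableAt ℂ Φ (b + z • w) := hΦ.differentiableAt (hV.mem_nhds hx)
      have h2 : DifferentiableAt ℂ (fun z : ℂ => b + z • w) z :=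
        (differentiableAt_id.smul_const w).const_add b
      exact (h1.comp z h2).differentiableWithinAt
    have hFbd : ∀ z ∈ closedBall (0:ℂ) R, ‖F z‖ ≤ B := fun z hz => hbd _ (hmem z hz)
    have hF0 : F 0 = Φ b := by simp [hFdef]
    have hF0' : HasDerivAt F (fderiv ℂ Φ b w) 0 := by
      have hg : HasDerivAt (fun z : ℂ => b + z • w) w 0 := by
        simpa using ((hasDerivAt_id (0:ℂ)).smul_const w).const_add b
      have hl : HasFDerivAt Φ (fderiv ℂ Φ b) (b + (0:ℂ) • w) := by
        rw [show b + (0:ℂ) • w = b by simp]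
        exact (hΦ.differentiableAt (hV.mem_nhds hbV)).hasFDerivAt
      exact hl.comp_hasDerivAt 0 hg
    have hderiv0 : deriv F 0 = fderiv ℂ Φ b w := hF0'.deriv
    have d1 : DifferentiableOn ℂ (dslope F 0) (closedBall 0 R) :=
      (Complex.differentiableOn_dslope (closedBall_mem_nhds _ hR)).mpr hF
    have s1 : ∀ z ∈ sphere (0:ℂ) R, ‖dslope F 0 z‖ ≤ 2 * B / R := by
      intro z hz
      have hzR : ‖z‖ = R := mem_sphere_zero_iff_norm.mp hz
      have hzne : z ≠ 0 := by
        intro h; rw [h] at hzR; simp at hzR; exact hR.ne (by linarith [hzR])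
      rw [dslope_of_ne F hzne, slope_def_module]
      rw [sub_zero, norm_smul, norm_inv, hzR]
      have hzb : z ∈ closedBall (0:ℂ) R := sphere_subset_closedBall hz
      have : ‖F z - F 0‖ ≤ B + B :=
        (norm_sub_le _ _).trans (add_le_add (hFbd z hzb) (hFbd 0 (mem_closedBall_self hR.le)))
      calc R⁻¹ * ‖F z - F 0‖ ≤ R⁻¹ * (B + B) := by gcongr
        _ = 2 * B / R := by field_simp; ring
    have b1 : ‖deriv F 0‖ ≤ 2 * B / R := by
      have := max_principle hR d1 s1 (mem_closedBall_self hR.le)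
      rwa [dslope_same] at this
    constructor
    · rw [← hderiv0]
      calc ‖deriv F 0‖ ≤ 2 * B / R := b1
        _ = 2 * B / r * ‖w‖ := by rw [hRdef]; field_simp
    · intro hwr
      have hR1 : (1:ℝ) ≤ R := (one_le_div hwn).mpr hwr
      have d2 : DifferentiableOn ℂ (dslope (dslope F 0) 0) (closedBall 0 R) :=
        (Complex.differentiableOn_dslope (closedBall_mem_nhds _ hR)).mpr d1
      have s2 : ∀ z ∈ sphere (0:ℂ) R, ‖dslope (dslope F 0) 0 z‖ ≤ 4 * B / R ^ 2 := by
        intro z hz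
        have hzR : ‖z‖ = R := mem_sphere_zero_iff_norm.mp hz
        have hzne : z ≠ 0 := by
          intro h; rw [h] at hzR; simp at hzR; exact hR.ne (by linarith [hzR])
        rw [dslope_of_ne _ hzne, slope_def_module, sub_zero, norm_smul, norm_inv, hzR]
        have h1 : ‖dslope F 0 z - dslope F 0 0‖ ≤ 2 * B / R + 2 * B / R := by
          refine (norm_sub_le _ _).trans (add_le_add (s1 z hz) ?_)
          rw [dslope_same]; exact b1
        calc R⁻¹ * ‖dslope F 0 z - dslope F 0 0‖ ≤ R⁻¹ * (2 * B / R + 2 * B / R) := by gcongr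
          _ = 4 * B / R ^ 2 := by field_simp; ring
      have b2 : ‖dslope (dslope F 0) 0 1‖ ≤ 4 * B / R ^ 2 := by
        refine max_principle hR d2 s2 ?_
        simpa [mem_closedBall_zero_iff] using hR1
      have hval : dslope (dslope F 0) 0 1 = Φ (b + w) - Φ b - fderiv ℂ Φ b w := by
        rw [dslope_of_ne _ (one_ne_zero), slope_def_module, sub_zero, inv_one, one_smul,
          dslope_of_ne _ (one_ne_zero), slope_def_module, sub_zero, inv_one, one_smul,
          dslope_same, hderiv0, hF0]
        simp [hFdef]
      rw [hval] at b2
      calc ‖Φ (b + w) - Φ b - fderiv ℂ Φ b w‖ ≤ 4 * B / R ^ 2 := b2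
        _ = 4 * B / r ^ 2 * ‖w‖ ^ 2 := by rw [hRdef]; field_simp

/-- Invariance of (the modulus of) the Stokes constant under analytic symplectic
conjugation. -/
theorem stokes_constant_invariant
    (U : Set (ℂ × ℂ)) (hU : IsOpen U)
    (K : Set (ℂ × ℂ)) (hK : IsCompact K) (hKconv : Convex ℝ K) (hKU : K ⊆ U)
    (Φ : ℂ × ℂ → ℂ × ℂ) (hΦ : DifferentiableOn ℂ Φ U)
    (hsymp : ∀ p ∈ U, ∀ u v : ℂ × ℂ,
      symp (fderiv ℂ Φ p u) (fderiv ℂ Φ p v) = symp u v)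
    (c : ℝ) (s₀ : ℝ) (hs₀ : 0 < s₀) (M : ℝ) (hM : 0 < M)
    (Ω : Set ℂ) (hΩ : IsOpen Ω)
    (hray : ∀ s : ℝ, s₀ ≤ s → ((c : ℂ) - Complex.I * (s : ℂ)) ∈ Ω)
    (Wp Wm : ℂ → ℂ × ℂ)
    (hWp : DifferentiableOn ℂ Wp Ω) (hWm : DifferentiableOn ℂ Wm Ω)
    (hWpK : ∀ s : ℝ, s₀ ≤ s → Wp ((c : ℂ) - Complex.I * (s : ℂ)) ∈ K)
    (hWmK : ∀ s : ℝ, s₀ ≤ s → Wm ((c : ℂ) - Complex.I * (s : ℂ)) ∈ K)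
    (hδ : ∀ s : ℝ, s₀ ≤ s →
      ‖Wp ((c : ℂ) - Complex.I * (s : ℂ)) - Wm ((c : ℂ) - Complex.I * (s : ℂ))‖ ≤
        M * Real.exp (-(2 * Real.pi) * s))
    (hW' : ∀ s : ℝ, s₀ ≤ s → ‖deriv Wm ((c : ℂ) - Complex.I * (s : ℂ))‖ ≤ M)
    (θF : ℂ)
    (hθ : Tendsto (fun s : ℝ =>
        Complex.exp (2 * Real.pi * Complex.I * ((c : ℂ) - Complex.I * (s : ℂ))) *
          symp (Wp ((c : ℂ) - Complex.I * (s : ℂ)) - Wm ((c : ℂ) - Complex.I * (s : ℂ)))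
            (deriv Wm ((c : ℂ) - Complex.I * (s : ℂ))))
        atTop (nhds θF)) :
    Tendsto (fun s : ℝ =>
        Complex.exp (2 * Real.pi * Complex.I * (-(Complex.I * (s : ℂ)))) *
          symp (Φ (Wp (-(Complex.I * (s : ℂ)) + (c : ℂ))) -
                Φ (Wm (-(Complex.I * (s : ℂ)) + (c : ℂ))))
            (deriv (fun t : ℂ => Φ (Wm (t + (c : ℂ)))) (-(Complex.I * (s : ℂ)))))
      atTop (nhds (Complex.exp (-(2 * Real.pi * Complex.I * (c : ℂ))) * θF)) ∧
    ‖Complex.exp (-(2 * Real.pi * Complex.I * (c : ℂ))) * θF‖ =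
      ‖θF‖ := by
  have habs : ‖Complex.exp (-(2 * Real.pi * Complex.I * (c : ℂ))) * θF‖ =
      ‖θF‖ := by
    rw [norm_mul, Complex.norm_exp]
    norm_num [Complex.mul_re, Complex.mul_im, Complex.I_re, Complex.I_im]
  refine ⟨?_, habs⟩
  -- abbreviation for the ray point
  set z : ℝ → ℂ := fun s => (c : ℂ) - Complex.I * (s : ℂ) with hzdef
  -- constants from the Cauchy estimates
  obtain ⟨r, hr, hrK⟩ := hK.exists_cthickening_subset_open hU hKU
  have hK' : IsCompact (cthickening r K) := hK.cthickening
  obtain ⟨B₀, hB₀⟩ := hK'.exists_bound_of_continuousOn ((hΦ.continuousOn).mono hrK)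
  set B : ℝ := max B₀ 0 with hBdef
  have hBnn : (0:ℝ) ≤ B := le_max_right _ _
  have hnear : ∀ p ∈ K, ∀ x : ℂ × ℂ, ‖x - p‖ ≤ r → x ∈ cthickening r K := by
    intro p hp x hx
    exact mem_cthickening_of_dist_le x p r K hp (by rwa [dist_eq_norm])
  have hDer : ∀ p ∈ K, ∀ w : ℂ × ℂ, ‖fderiv ℂ Φ p w‖ ≤ 2 * B / r * ‖w‖ := by
    intro p hp w
    exact (cauchy_key hU hΦ hr hBnn (fun x hx => hrK (hnear p hp x hx))
      (fun x hx => (hB₀ x (hnear p hp x hx)).trans (le_max_left _ _)) w).1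
  have hTay : ∀ p ∈ K, ∀ w : ℂ × ℂ, ‖w‖ ≤ r →
      ‖Φ (p + w) - Φ p - fderiv ℂ Φ p w‖ ≤ 4 * B / r ^ 2 * ‖w‖ ^ 2 := by
    intro p hp w hw
    exact (cauchy_key hU hΦ hr hBnn (fun x hx => hrK (hnear p hp x hx))
      (fun x hx => (hB₀ x (hnear p hp x hx)).trans (le_max_left _ _)) w).2 hw
  have h2nn : (0:ℝ) ≤ 2 * B / r := div_nonneg (by linarith) hr.le
  have h4nn : (0:ℝ) ≤ 4 * B / r ^ 2 := div_nonneg (by linarith) (by positivity)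
  -- norm of the exponential factor
  have hnorm : ∀ s : ℝ,
      ‖Complex.exp (2 * Real.pi * Complex.I * (-(Complex.I * (s : ℂ))))‖ =
        Real.exp (2 * Real.pi * s) := by
    intro s
    rw [Complex.norm_exp]
    congr 1
    have : (2 * (Real.pi:ℂ) * Complex.I * (-(Complex.I * (s:ℂ)))) = ((2 * Real.pi * s : ℝ) : ℂ) := by
      have hI : Complex.I * Complex.I = -1 := Complex.I_mul_I
      push_cast
      linear_combination (-(2:ℂ) * Real.pi * s) * hI
    rw [this, Complex.ofReal_re]
  -- the error term
  set E : ℝ → ℂ := fun s =>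
    Complex.exp (2 * Real.pi * Complex.I * (-(Complex.I * (s : ℂ)))) *
      symp (Φ (Wp (z s)) - Φ (Wm (z s)) - fderiv ℂ Φ (Wm (z s)) (Wp (z s) - Wm (z s)))
        (fderiv ℂ Φ (Wm (z s)) (deriv Wm (z s))) with hEdef
  have hexp0 : Tendsto (fun s : ℝ => Real.exp (-(2 * Real.pi) * s)) atTop (nhds 0) := by
    refine Real.tendsto_exp_atBot.comp ?_
    exact (tendsto_const_mul_atBot_of_neg (by linarith [Real.pi_pos])).mpr tendsto_id
  have hE : Tendsto E atTop (nhds 0) := by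
    apply squeeze_zero_norm'
      (a := fun s : ℝ => 2 * (4 * B / r ^ 2 * M ^ 2 * (2 * B / r * M)) * Real.exp (-(2 * Real.pi) * s))
    · have hev1 : ∀ᶠ s : ℝ in atTop, M * Real.exp (-(2 * Real.pi) * s) ≤ r := by
        have h1 : Tendsto (fun s : ℝ => M * Real.exp (-(2 * Real.pi) * s)) atTop (nhds 0) := by
          simpa using hexp0.const_mul M
        exact h1.eventually (eventually_le_nhds hr)
      filter_upwards [hev1, eventually_ge_atTop s₀] with s hMr hs
      have hmK : Wm (z s) ∈ K := hWmK s hs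
      have hδs := hδ s hs
      have hRa : ‖Φ (Wp (z s)) - Φ (Wm (z s)) - fderiv ℂ Φ (Wm (z s)) (Wp (z s) - Wm (z s))‖ ≤
          4 * B / r ^ 2 * (M * Real.exp (-(2 * Real.pi) * s)) ^ 2 := by
        have h1 := hTay (Wm (z s)) hmK (Wp (z s) - Wm (z s)) (hδs.trans hMr)
        rw [show Wm (z s) + (Wp (z s) - Wm (z s)) = Wp (z s) from by abel] at h1
        refine h1.trans ?_
        exact mul_le_mul_of_nonneg_left (pow_le_pow_left₀ (norm_nonneg _) hδs 2) h4nn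
      have hDb : ‖fderiv ℂ Φ (Wm (z s)) (deriv Wm (z s))‖ ≤ 2 * B / r * M :=
        (hDer _ hmK _).trans (mul_le_mul_of_nonneg_left (hW' s hs) h2nn)
      have hcalc : ‖E s‖ ≤ Real.exp (2 * Real.pi * s) *
          (2 * (4 * B / r ^ 2 * (M * Real.exp (-(2 * Real.pi) * s)) ^ 2 * (2 * B / r * M))) := by
        rw [hEdef]
        simp only [norm_mul]
        rw [hnorm s]
        refine mul_le_mul_of_nonneg_left ?_ (Real.exp_pos _).le
        refine (norm_symp_le _ _).trans ?_
        have := mul_le_mul hRa hDb (norm_nonneg _)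
          (mul_nonneg h4nn (sq_nonneg _))
        linarith
      refine hcalc.trans (le_of_eq ?_)
      have hexp : Real.exp (2 * Real.pi * s) * Real.exp (-(2 * Real.pi) * s) ^ 2 =
          Real.exp (-(2 * Real.pi) * s) := by
        rw [sq, ← Real.exp_add, ← Real.exp_add]; ring_nf
      calc Real.exp (2 * Real.pi * s) *
            (2 * (4 * B / r ^ 2 * (M * Real.exp (-(2 * Real.pi) * s)) ^ 2 * (2 * B / r * M)))
          = 2 * (4 * B / r ^ 2 * M ^ 2 * (2 * B / r * M)) *
              (Real.exp (2 * Real.pi * s) * Real.exp (-(2 * Real.pi) * s) ^ 2) := by ring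
        _ = _ := by rw [hexp]
    · simpa using hexp0.const_mul (2 * (4 * B / r ^ 2 * M ^ 2 * (2 * B / r * M)))
  -- main limit
  have hmain : Tendsto (fun s : ℝ =>
      Complex.exp (-(2 * Real.pi * Complex.I * (c : ℂ))) *
        (Complex.exp (2 * Real.pi * Complex.I * (z s)) *
          symp (Wp (z s) - Wm (z s)) (deriv Wm (z s))) + E s) atTop
      (nhds (Complex.exp (-(2 * Real.pi * Complex.I * (c : ℂ))) * θF)) := by
    simpa using (hθ.const_mul (Complex.exp (-(2 * Real.pi * Complex.I * (c : ℂ))))).add hE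
  refine Tendsto.congr' ?_ hmain
  filter_upwards [eventually_ge_atTop s₀] with s hs
  have harg : -(Complex.I * (s : ℂ)) + (c : ℂ) = z s := by rw [hzdef]; ring
  have hmK : Wm (z s) ∈ K := hWmK s hs
  have hUm : Wm (z s) ∈ U := hKU hmK
  have hWmd : DifferentiableAt ℂ Wm (z s) := hWm.differentiableAt (hΩ.mem_nhds (hray s hs))
  have hΦm : DifferentiableAt ℂ Φ (Wm (z s)) := hΦ.differentiableAt (hU.mem_nhds hUm)
  have hchain : deriv (fun t : ℂ => Φ (Wm (t + (c : ℂ)))) (-(Complex.I * (s : ℂ))) =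
      fderiv ℂ Φ (Wm (z s)) (deriv Wm (z s)) := by
    have h0 : HasDerivAt (fun t : ℂ => t + (c : ℂ)) 1 (-(Complex.I * (s : ℂ))) :=
      (hasDerivAt_id _).add_const _
    have h2 : HasDerivAt Wm (deriv Wm (z s)) (z s) := hWmd.hasDerivAt
    have h1 : HasDerivAt (fun t : ℂ => Wm (t + (c : ℂ))) (deriv Wm (z s)) (-(Complex.I * (s : ℂ))) := by
      simpa [Function.comp_def] using HasDerivAt.scomp_of_eq _ h2 h0 harg.symm
    have h3 : HasFDerivAt Φ (fderiv ℂ Φ (Wm (z s))) (Wm (z s)) := hΦm.hasFDerivAt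
    exact (HasFDerivAt.comp_hasDerivAt_of_eq _ h3 h1 (congrArg Wm harg.symm)).deriv
  rw [harg, hchain]
  have hsplit : Φ (Wp (z s)) - Φ (Wm (z s)) =
      (Φ (Wp (z s)) - Φ (Wm (z s)) - fderiv ℂ Φ (Wm (z s)) (Wp (z s) - Wm (z s))) +
        fderiv ℂ Φ (Wm (z s)) (Wp (z s) - Wm (z s)) := by abel
  rw [hsplit, symp_add_left, hsymp _ hUm]
  have hexpc : Complex.exp (-(2 * Real.pi * Complex.I * (c : ℂ))) *
      Complex.exp (2 * Real.pi * Complex.I * (z s)) =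
      Complex.exp (2 * Real.pi * Complex.I * (-(Complex.I * (s : ℂ)))) := by
    rw [← Complex.exp_add]; congr 1; rw [hzdef]; ring
  rw [hEdef]
  simp only []
  rw [← mul_assoc, hexpc]
  ring
end

section
/- Let m ∈ ℕ and let x be a nonzero real number. Define (m+1) × (m+1) real matrices (indices from 0 to m): A with A_{0,0} = x/√3, A_{j,j} = 1/2 − j for 1 ≤ j ≤ m, A_{j−1,j} = 1/2 + j for 1 ≤ j ≤ m, and all other entries 0; B = −(2/√3) · Id; C with C_{0,0} = x and all other entries 0; and D with D_{j,j} = −(j+1) for 0 ≤ j ≤ m, D_{j,j+1} = j+1 for 0 ≤ j ≤ m−1, and all other entries 0. Then the 2(m+1) × 2(m+1) block matrix M = [[A, B],[C, D]] is invertible. -/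
/-- Invertibility of the block matrix `M = [[A, B],[C, D]]` arising in the linear
systems determining the coefficients of the formal separatrix at even orders. -/
theorem block_matrix_invertible (m : ℕ) (x : ℝ) (hx : x ≠ 0)
    (A B C D : Matrix (Fin (m + 1)) (Fin (m + 1)) ℝ)
    (hA : ∀ i j : Fin (m + 1),
      A i j =
        if (j : ℕ) = (i : ℕ) then
          (if (i : ℕ) = 0 then x / Real.sqrt 3 else (1 : ℝ) / 2 - ((i : ℕ) : ℝ))
        else if (j : ℕ) = (i : ℕ) + 1 then (1 : ℝ) / 2 + ((j : ℕ) : ℝ) else 0)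
    (hB : B = (-(2 / Real.sqrt 3)) • (1 : Matrix (Fin (m + 1)) (Fin (m + 1)) ℝ))
    (hC : ∀ i j : Fin (m + 1),
      C i j = if (i : ℕ) = 0 ∧ (j : ℕ) = 0 then x else 0)
    (hD : ∀ i j : Fin (m + 1),
      D i j = if (j : ℕ) = (i : ℕ) then -(((i : ℕ) : ℝ) + 1)
        else if (j : ℕ) = (i : ℕ) + 1 then ((i : ℕ) : ℝ) + 1 else 0) :
    IsUnit (Matrix.fromBlocks A B C D) := by
  have h3 : Real.sqrt 3 ≠ 0 := by
    have : (0:ℝ) < Real.sqrt 3 := Real.sqrt_pos.2 (by norm_num)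
    linarith
  -- D is upper triangular with nonzero diagonal
  have hDt : D.BlockTriangular id := by
    intro i j hij
    simp only [id] at hij
    have hij' : (j : ℕ) < (i : ℕ) := hij
    rw [hD]
    rw [if_neg (by omega), if_neg (by omega)]
  have hDdet : D.det ≠ 0 := by
    rw [Matrix.det_of_upperTriangular hDt]
    apply Finset.prod_ne_zero_iff.2
    intro i _
    rw [hD, if_pos rfl]
    have : (0:ℝ) ≤ ((i:ℕ):ℝ) := Nat.cast_nonneg _
    intro h; nlinarith [h]
  haveI : Invertible D := D.invertibleOfIsUnitDet (isUnit_iff_ne_zero.2 hDdet)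
  have hDinvT : D⁻¹.BlockTriangular id :=
    Matrix.blockTriangular_inv_of_blockTriangular hDt
  have hDinv0 : ∀ i : Fin (m+1), (i : ℕ) ≠ 0 → D⁻¹ i 0 = 0 := by
    intro i hi
    apply hDinvT
    simp only [id]
    exact Fin.lt_def.2 (by simp only [Fin.val_zero]; omega)
  have hDinv00 : D⁻¹ 0 0 = -1 := by
    have h1 : (D * D⁻¹) 0 0 = 1 := by
      rw [Matrix.mul_nonsing_inv D (isUnit_iff_ne_zero.2 hDdet)]
      simp
    rw [Matrix.mul_apply, Finset.sum_eq_single (0 : Fin (m+1))] at h1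
    · rw [hD] at h1
      simp at h1
      linarith
    · intro k _ hk
      rw [hDinv0 k (fun h => hk (Fin.ext h)), mul_zero]
    · simp
  -- entries of D⁻¹ * C
  have hDC : ∀ i j : Fin (m+1), (D⁻¹ * C) i j =
      if (i : ℕ) = 0 ∧ (j : ℕ) = 0 then -x else 0 := by
    intro i j
    rw [Matrix.mul_apply, Finset.sum_eq_single (0 : Fin (m+1))]
    · rw [hC]
      by_cases hj : (j : ℕ) = 0
      · by_cases hi : (i : ℕ) = 0
        · have : i = 0 := by exact Fin.ext hi
          subst this
          simp [hj, hDinv00]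
        · rw [hDinv0 i hi]
          simp [hi]
      · simp [hj]
    · intro k _ hk
      rw [hC, if_neg (by simp; intro h; exact absurd h hk), mul_zero]
    · simp
  -- the Schur complement is upper triangular with nonzero diagonal
  have hE : (A - B * ⅟D * C).BlockTriangular id := by
    intro i j hij
    have hij' : (j : ℕ) < (i : ℕ) := hij
    rw [Matrix.invOf_eq_nonsing_inv, hB]
    simp only [Matrix.sub_apply, Matrix.smul_mul, Matrix.one_mul, Matrix.smul_apply,
      Matrix.mul_assoc, smul_eq_mul]
    rw [hDC, hA, if_neg (by omega), if_neg (by omega), if_neg (by omega)]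
    simp
  have hEdet : (A - B * ⅟D * C).det ≠ 0 := by
    rw [Matrix.det_of_upperTriangular hE]
    apply Finset.prod_ne_zero_iff.2
    intro i _
    rw [Matrix.invOf_eq_nonsing_inv, hB]
    simp only [Matrix.sub_apply, Matrix.smul_mul, Matrix.one_mul, Matrix.smul_apply,
      Matrix.mul_assoc, smul_eq_mul]
    rw [hDC, hA, if_pos rfl]
    by_cases hi : (i : ℕ) = 0
    · rw [if_pos hi, if_pos ⟨hi, hi⟩]
      have : x / Real.sqrt 3 - -(2 / Real.sqrt 3) * -x = -x / Real.sqrt 3 := by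
        field_simp; ring
      rw [this]
      intro h
      apply hx
      have := div_eq_zero_iff.1 h
      rcases this with h' | h'
      · linarith
      · exact absurd h' h3
    · rw [if_neg hi, if_neg (by simp [hi]), mul_zero, sub_zero]
      intro h
      have h2 : ((i:ℕ):ℝ) = 1/2 := by linarith
      have : (2 * (i:ℕ) : ℝ) = 1 := by linarith
      have : (2 * (i:ℕ) : ℕ) = 1 := by exact_mod_cast this
      omega
  rw [Matrix.isUnit_iff_isUnit_det, Matrix.det_fromBlocks₂₂,
    isUnit_iff_ne_zero]
  exact mul_ne_zero hDdet hEdet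
end

section
/- Let α, β ≥ 1 and let D = {z ∈ ℂ : |Re z| ≤ α, |Im z| ≤ β} be the closed rectangle. Let g : D → ℂ and let g₀ ∈ ℂ and (g_n)_{n≥1} be complex numbers such that g(τ) = g₀ + ∑_{n≥1} g_n e^{−2π n i τ} + ∑_{n≥1} conj(g_n) e^{2π n i τ} for all τ ∈ D, with both series converging uniformly on D. Then |g_n| ≤ ‖g‖_D e^{−2π β n} for every n ≥ 1. If moreover there exists a real τ_h ∈ [−α, α] with g(τ_h) = 0, then |g₀| ≤ 4 ‖g‖_D e^{−2π β}. -/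
open Filter

open Complex in
private lemma key_integral (β : ℝ) (k : ℤ) :
    (∫ t in (0:ℝ)..1,
      Complex.exp ((2 * (Real.pi:ℂ) * Complex.I * (k:ℂ)) * ((t:ℂ) + Complex.I * (β:ℂ))))
      = if k = 0 then 1 else 0 := by
  rcases eq_or_ne k 0 with hk | hk
  · simp [hk]
  · have hc : (2 * (Real.pi:ℂ) * Complex.I * (k:ℂ)) ≠ 0 := by
      simp [Real.pi_ne_zero, Complex.I_ne_zero, hk]
    rw [if_neg hk]
    have hsplit : ∀ t : ℝ, (2 * (Real.pi:ℂ) * Complex.I * (k:ℂ)) * ((t:ℂ) + Complex.I * (β:ℂ))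
        = (2 * (Real.pi:ℂ) * Complex.I * (k:ℂ)) * (t:ℂ)
          + (2 * (Real.pi:ℂ) * Complex.I * (k:ℂ)) * (Complex.I * (β:ℂ)) := fun t => by ring
    simp only [hsplit, Complex.exp_add]
    rw [intervalIntegral.integral_mul_const, integral_exp_mul_complex hc]
    have h1 : (2 * (Real.pi:ℂ) * Complex.I * (k:ℂ)) * (1:ℝ) = (k:ℂ) * (2 * Real.pi * Complex.I) := by
      push_cast; ring
    have h0 : (2 * (Real.pi:ℂ) * Complex.I * (k:ℂ)) * ((0:ℝ):ℂ) = 0 := by push_cast; ring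
    rw [h1, h0, Complex.exp_int_mul_two_pi_mul_I, Complex.exp_zero]
    simp

/-- The closed rectangle `{z ∈ ℂ : |Re z| ≤ α, |Im z| ≤ β}`. -/
def rect (α β : ℝ) : Set ℂ := {z : ℂ | |z.re| ≤ α ∧ |z.im| ≤ β}

/-- Fourier coefficients of a 1-periodic analytic function on a rectangle:
`|g_n| ≤ ‖g‖_D e^{−2πβn}` for `n ≥ 1`, and if `g` has a real zero in `[−α, α]`
then `|g₀| ≤ 4 ‖g‖_D e^{−2πβ}`. -/
theorem fourier_coefficients_bound (α β : ℝ) (hα : 1 ≤ α) (hβ : 1 ≤ β)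
    (g : ℂ → ℂ) (g₀ : ℂ) (gn : ℕ → ℂ) (S₁ S₂ : ℂ → ℂ)
    (hS₁ : TendstoUniformlyOn
      (fun N : ℕ => fun τ : ℂ => ∑ n ∈ Finset.Icc 1 N,
        gn n * Complex.exp (-(2 * Real.pi * (n : ℂ) * Complex.I * τ)))
      S₁ atTop (rect α β))
    (hS₂ : TendstoUniformlyOn
      (fun N : ℕ => fun τ : ℂ => ∑ n ∈ Finset.Icc 1 N,
        (starRingEnd ℂ) (gn n) * Complex.exp (2 * Real.pi * (n : ℂ) * Complex.I * τ))
      S₂ atTop (rect α β))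
    (hg : ∀ τ ∈ rect α β, g τ = g₀ + S₁ τ + S₂ τ) :
    (∀ n : ℕ, 1 ≤ n →
      ‖gn n‖ ≤
        (⨆ τ ∈ rect α β, ‖g τ‖) * Real.exp (-(2 * Real.pi * β * n))) ∧
    ((∃ τh : ℝ, τh ∈ Set.Icc (-α) α ∧ g (τh : ℂ) = 0) →
      ‖g₀‖ ≤
        4 * (⨆ τ ∈ rect α β, ‖g τ‖) * Real.exp (-(2 * Real.pi * β))) := by
  classical
  set M : ℝ := ⨆ τ ∈ rect α β, ‖g τ‖ with hMdef
  -- basic facts about the rectangle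
  have hβ0 : (0:ℝ) < β := lt_of_lt_of_le one_pos hβ
  have hrect_closed : IsClosed (rect α β) := by
    have : rect α β = (fun z : ℂ => |z.re|) ⁻¹' Set.Iic α ∩ (fun z : ℂ => |z.im|) ⁻¹' Set.Iic β := rfl
    rw [this]
    exact (isClosed_Iic.preimage (by fun_prop)).inter (isClosed_Iic.preimage (by fun_prop))
  have hrect_cpt : IsCompact (rect α β) := by
    refine Metric.isCompact_of_isClosed_isBounded hrect_closed ?_
    refine (Metric.isBounded_iff_subset_closedBall 0).2 ⟨α + β, ?_⟩
    intro z hz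
    simp only [Metric.mem_closedBall, dist_zero_right]
    exact (Complex.norm_le_abs_re_add_abs_im z).trans (add_le_add hz.1 hz.2)
  have hP₁cont : ∀ N : ℕ, Continuous (fun τ : ℂ => ∑ n ∈ Finset.Icc 1 N,
      gn n * Complex.exp (-(2 * Real.pi * (n : ℂ) * Complex.I * τ))) := by
    intro N
    exact continuous_finset_sum _ fun n _ =>
      continuous_const.mul (Complex.continuous_exp.comp (by fun_prop))
  have hP₂cont : ∀ N : ℕ, Continuous (fun τ : ℂ => ∑ n ∈ Finset.Icc 1 N,
      (starRingEnd ℂ) (gn n) * Complex.exp (2 * Real.pi * (n : ℂ) * Complex.I * τ)) := by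
    intro N
    exact continuous_finset_sum _ fun n _ =>
      continuous_const.mul (Complex.continuous_exp.comp (by fun_prop))
  have hS₁cont : ContinuousOn S₁ (rect α β) :=
    hS₁.continuousOn (Eventually.of_forall fun N => (hP₁cont N).continuousOn).frequently
  have hS₂cont : ContinuousOn S₂ (rect α β) :=
    hS₂.continuousOn (Eventually.of_forall fun N => (hP₂cont N).continuousOn).frequently
  have himg : BddAbove ((fun τ => ‖g τ‖) '' rect α β) := by
    have heq : (fun τ => ‖g τ‖) '' rect α β
        = (fun τ => ‖g₀ + S₁ τ + S₂ τ‖) '' rect α β :=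
      Set.image_congr fun τ hτ => by rw [hg τ hτ]
    rw [heq]
    exact (hrect_cpt.image_of_continuousOn
      (continuous_norm.comp_continuousOn
        ((continuousOn_const.add hS₁cont).add hS₂cont))).bddAbove
  have h0mem : (0:ℂ) ∈ rect α β := by
    constructor <;> simp <;> linarith
  have hMle : ∀ τ ∈ rect α β, ‖g τ‖ ≤ M := by
    intro τ hτ
    have hbdd : BddAbove (Set.range fun τ' => ⨆ _ : τ' ∈ rect α β, ‖g τ'‖) := by
      obtain ⟨C, hC⟩ := himg
      refine ⟨max 0 C, ?_⟩
      rintro x ⟨τ', rfl⟩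
      dsimp only
      by_cases hτ' : τ' ∈ rect α β
      · haveI : Nonempty (τ' ∈ rect α β) := ⟨hτ'⟩
        rw [ciSup_const]
        exact le_max_of_le_right (hC (Set.mem_image_of_mem _ hτ'))
      · haveI : IsEmpty (τ' ∈ rect α β) := ⟨hτ'⟩
        rw [Real.iSup_of_isEmpty]
        exact le_max_left _ _
    haveI : Nonempty (τ ∈ rect α β) := ⟨hτ⟩
    calc ‖g τ‖ = ⨆ _ : τ ∈ rect α β, ‖g τ‖ := ciSup_const.symm
      _ ≤ M := le_ciSup hbdd τ
  have hM0 : 0 ≤ M := le_trans (norm_nonneg _) (hMle 0 h0mem)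
  -- Part 1
  have part1 : ∀ n : ℕ, 1 ≤ n →
      ‖gn n‖ ≤ M * Real.exp (-(2 * Real.pi * β * n)) := by
    intro m hm
    set E : ℝ := Real.exp (-(2 * Real.pi * β * m)) with hEdef
    have hEpos : 0 < E := Real.exp_pos _
    refine le_of_forall_pos_le_add fun δ hδ => ?_
    set ε : ℝ := δ / (2 * E) with hεdef
    have hεpos : 0 < ε := div_pos hδ (by positivity)
    obtain ⟨N, ⟨hN1, hN2⟩, hNm⟩ := (((Metric.tendstoUniformlyOn_iff.1 hS₁ ε hεpos).and
      (Metric.tendstoUniformlyOn_iff.1 hS₂ ε hεpos)).and (eventually_ge_atTop m)).exists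
    set eint : ℤ → ℝ → ℂ := fun k t => Complex.exp
      ((2 * (Real.pi:ℂ) * Complex.I * (k:ℂ)) * ((t:ℂ) + Complex.I * (β:ℂ))) with heintdef
    have heintcont : ∀ k : ℤ, Continuous (eint k) := fun k => by
      apply Complex.continuous_exp.comp
      fun_prop
    have hkey : ∀ k : ℤ, (∫ t in (0:ℝ)..1, eint k t) = if k = 0 then 1 else 0 :=
      fun k => key_integral β k
    set P : ℝ → ℂ := fun t => g₀
      + (∑ n ∈ Finset.Icc 1 N, gn n * Complex.exp
          (-(2 * Real.pi * (n : ℂ) * Complex.I * ((t:ℂ) + Complex.I * β))))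
      + (∑ n ∈ Finset.Icc 1 N, (starRingEnd ℂ) (gn n) * Complex.exp
          (2 * Real.pi * (n : ℂ) * Complex.I * ((t:ℂ) + Complex.I * β))) with hPdef
    have hfun : ∀ t : ℝ, P t * eint (m:ℤ) t
        = g₀ * eint (m:ℤ) t + (∑ n ∈ Finset.Icc 1 N, gn n * eint ((m:ℤ) - (n:ℤ)) t)
          + ∑ n ∈ Finset.Icc 1 N, (starRingEnd ℂ) (gn n) * eint ((m:ℤ) + (n:ℤ)) t := by
      intro t
      have e1 : ∀ n : ℕ, Complex.exp (-(2 * Real.pi * (n:ℂ) * Complex.I * ((t:ℂ) + Complex.I * β)))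
          * eint (m:ℤ) t = eint ((m:ℤ) - (n:ℤ)) t := by
        intro n
        simp only [heintdef, ← Complex.exp_add]
        congr 1
        push_cast
        ring
      have e2 : ∀ n : ℕ, Complex.exp (2 * Real.pi * (n:ℂ) * Complex.I * ((t:ℂ) + Complex.I * β))
          * eint (m:ℤ) t = eint ((m:ℤ) + (n:ℤ)) t := by
        intro n
        simp only [heintdef, ← Complex.exp_add]
        congr 1
        push_cast
        ring
      simp only [hPdef, add_mul, Finset.sum_mul]
      congr 1
      · congr 1
        exact Finset.sum_congr rfl fun n _ => by rw [mul_assoc, e1]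
      · exact Finset.sum_congr rfl fun n _ => by rw [mul_assoc, e2]
    have hJ : (∫ t in (0:ℝ)..1, P t * eint (m:ℤ) t) = gn m := by
      have hA : IntervalIntegrable (fun t => g₀ * eint (m:ℤ) t) MeasureTheory.volume 0 1 :=
        (continuous_const.mul (heintcont _)).intervalIntegrable 0 1
      have hB : IntervalIntegrable
          (fun t => ∑ n ∈ Finset.Icc 1 N, gn n * eint ((m:ℤ) - (n:ℤ)) t)
          MeasureTheory.volume 0 1 :=
        (continuous_finset_sum _ fun n _ => continuous_const.mul (heintcont _)).intervalIntegrable 0 1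
      have hC : IntervalIntegrable
          (fun t => ∑ n ∈ Finset.Icc 1 N, (starRingEnd ℂ) (gn n) * eint ((m:ℤ) + (n:ℤ)) t)
          MeasureTheory.volume 0 1 :=
        (continuous_finset_sum _ fun n _ => continuous_const.mul (heintcont _)).intervalIntegrable 0 1
      simp only [hfun]
      rw [intervalIntegral.integral_add (hA.add hB) hC, intervalIntegral.integral_add hA hB,
        intervalIntegral.integral_const_mul,
        intervalIntegral.integral_finset_sum (f := fun n t => gn n * eint ((m:ℤ) - (n:ℤ)) t)
          (fun n _ => (continuous_const.mul (heintcont _)).intervalIntegrable 0 1),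
        intervalIntegral.integral_finset_sum
          (f := fun n t => (starRingEnd ℂ) (gn n) * eint ((m:ℤ) + (n:ℤ)) t) (fun n _ => (continuous_const.mul (heintcont _)).intervalIntegrable 0 1)]
      simp only [intervalIntegral.integral_const_mul, hkey]
      have hm0 : ((m:ℤ) ≠ 0) := by omega
      rw [if_neg hm0, mul_zero, zero_add]
      have hz2 : ∀ n ∈ Finset.Icc 1 N,
          (starRingEnd ℂ) (gn n) * (if (m:ℤ) + (n:ℤ) = 0 then (1:ℂ) else 0) = 0 := by
        intro n hn
        have hn1 := (Finset.mem_Icc.1 hn).1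
        rw [if_neg (by omega), mul_zero]
      rw [Finset.sum_congr rfl hz2, Finset.sum_const_zero, add_zero]
      have hz1 : ∀ n ∈ Finset.Icc 1 N,
          gn n * (if (m:ℤ) - (n:ℤ) = 0 then (1:ℂ) else 0)
            = if n = m then gn n else 0 := by
        intro n hn
        by_cases h : n = m
        · simp [h]
        · rw [if_neg (by omega), mul_zero, if_neg h]
      rw [Finset.sum_congr rfl hz1, Finset.sum_ite_eq' _ m,
        if_pos (Finset.mem_Icc.2 ⟨hm, hNm⟩)]
    have hsub : ∀ t ∈ Set.uIoc (0:ℝ) 1, ‖P t * eint (m:ℤ) t‖ ≤ (M + 2*ε) * E := by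
      intro t ht
      rw [Set.uIoc_of_le (by norm_num : (0:ℝ) ≤ 1)] at ht
      have hre : ((t:ℂ) + Complex.I * β).re = t := by simp
      have him : ((t:ℂ) + Complex.I * β).im = β := by simp
      have htmem : (t:ℂ) + Complex.I * β ∈ rect α β := by
        refine ⟨?_, ?_⟩
        · rw [hre, abs_of_pos ht.1]; exact ht.2.trans hα
        · rw [him, abs_of_pos hβ0]
      have heqE : ‖eint (m:ℤ) t‖ = E := by
        rw [heintdef]
        simp only
        rw [Complex.norm_exp, hEdef]
        congr 1
        simp only [Complex.mul_re, Complex.add_re, Complex.add_im, Complex.mul_im,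
          Complex.I_re, Complex.I_im, Complex.ofReal_re, Complex.ofReal_im,
          Complex.re_ofNat, Complex.im_ofNat, Complex.intCast_re, Complex.intCast_im]
        push_cast
        ring
      have hPle : ‖P t‖ ≤ M + 2*ε := by
        have hgr := hg _ htmem
        have hsplit : P t = g ((t:ℂ) + Complex.I * β)
            + (((fun N τ => ∑ n ∈ Finset.Icc 1 N,
                gn n * Complex.exp (-(2 * Real.pi * (n : ℂ) * Complex.I * τ))) N
                  ((t:ℂ) + Complex.I * β) - S₁ ((t:ℂ) + Complex.I * β))
              + ((fun N τ => ∑ n ∈ Finset.Icc 1 N,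
                (starRingEnd ℂ) (gn n) * Complex.exp (2 * Real.pi * (n : ℂ) * Complex.I * τ)) N
                  ((t:ℂ) + Complex.I * β) - S₂ ((t:ℂ) + Complex.I * β))) := by
          rw [hgr, hPdef]
          simp only
          ring
        rw [hsplit]
        have h1 := hN1 _ htmem
        have h2 := hN2 _ htmem
        rw [dist_comm, dist_eq_norm] at h1 h2
        calc ‖_ + (_ + _)‖ ≤ ‖g ((t:ℂ) + Complex.I * β)‖ + (‖_‖ + ‖_‖) :=
              (norm_add_le _ _).trans (by gcongr; exact norm_add_le _ _)
          _ ≤ M + (ε + ε) := by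
              refine add_le_add ?_ (add_le_add h1.le h2.le)
              exact hMle _ htmem
          _ = M + 2*ε := by ring
      calc ‖P t * eint (m:ℤ) t‖ = ‖P t‖ * ‖eint (m:ℤ) t‖ := norm_mul _ _
        _ ≤ (M + 2*ε) * E := by
            rw [heqE]
            exact mul_le_mul_of_nonneg_right hPle hEpos.le
    have hnorm := intervalIntegral.norm_integral_le_of_norm_le_const hsub
    rw [hJ] at hnorm
    simp only [sub_zero, abs_one, mul_one] at hnorm
    calc ‖gn m‖ = ‖gn m‖ := rfl
      _ ≤ (M + 2*ε) * E := hnorm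
      _ = M * E + δ := by
          rw [hεdef]
          field_simp
  refine ⟨part1, ?_⟩
  -- Part 2
  rintro ⟨τh, hτh, hzero⟩
  have hτmem : ((τh:ℝ):ℂ) ∈ rect α β := by
    refine ⟨?_, ?_⟩
    · rw [Complex.ofReal_re]; exact abs_le.2 ⟨hτh.1, hτh.2⟩
    · rw [Complex.ofReal_im, abs_zero]; linarith
  set q : ℝ := Real.exp (-(2 * Real.pi * β)) with hqdef
  have hq0 : 0 < q := Real.exp_pos _
  have hq1 : q ≤ 1/2 := by
    rw [hqdef, Real.exp_neg]
    have hx : (2:ℝ) ≤ Real.exp (2 * Real.pi * β) := by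
      calc (2:ℝ) ≤ 2*Real.pi*β + 1 := by nlinarith [Real.pi_gt_three]
        _ ≤ Real.exp (2*Real.pi*β) := Real.add_one_le_exp _
    calc (Real.exp (2*Real.pi*β))⁻¹ ≤ 2⁻¹ := by
          exact inv_anti₀ (by norm_num) hx
      _ = 1/2 := by norm_num
  have hqlt1 : q < 1 := lt_of_le_of_lt hq1 (by norm_num)
  have hgeom : ∀ N : ℕ, (∑ n ∈ Finset.Icc 1 N, M * q^n) ≤ 2 * M * q := by
    intro N
    rw [← Finset.mul_sum]
    have hsum : (∑ n ∈ Finset.Icc 1 N, q^n) ≤ 2 * q := by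
      have h1 : (∑ n ∈ Finset.Icc 1 N, q^n) = q * ∑ i ∈ Finset.range N, q^i := by
        rw [← Finset.Ico_add_one_right_eq_Icc, Finset.sum_Ico_eq_sum_range, Finset.mul_sum]
        apply Finset.sum_congr (by norm_num) fun i _ => by rw [pow_add, pow_one]
      rw [h1]
      have h2 : (∑ i ∈ Finset.range N, q^i) ≤ (1-q)⁻¹ :=
        sum_le_hasSum _ (fun i _ => by positivity)
          (hasSum_geometric_of_lt_one hq0.le hqlt1)
      have h3 : (1-q)⁻¹ ≤ 2 := by
        rw [inv_le_comm₀ (by linarith) (by norm_num)]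
        linarith
      calc q * ∑ i ∈ Finset.range N, q^i ≤ q * (1-q)⁻¹ :=
            mul_le_mul_of_nonneg_left h2 hq0.le
        _ ≤ q * 2 := mul_le_mul_of_nonneg_left h3 hq0.le
        _ = 2 * q := by ring
    calc M * ∑ n ∈ Finset.Icc 1 N, q^n ≤ M * (2*q) := mul_le_mul_of_nonneg_left hsum hM0
      _ = 2*M*q := by ring
  have hgnq : ∀ n : ℕ, 1 ≤ n → ‖gn n‖ ≤ M * q ^ n := by
    intro n hn
    refine (part1 n hn).trans (le_of_eq ?_)
    congr 1
    rw [hqdef, ← Real.exp_nat_mul]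
    congr 1
    ring
  have hub1 : ∀ N : ℕ, ‖∑ n ∈ Finset.Icc 1 N,
      gn n * Complex.exp (-(2 * Real.pi * (n:ℂ) * Complex.I * ((τh:ℝ):ℂ)))‖ ≤ 2 * M * q := by
    intro N
    have hterm : ∀ n ∈ Finset.Icc 1 N, ‖gn n
        * Complex.exp (-(2 * Real.pi * (n:ℂ) * Complex.I * ((τh:ℝ):ℂ)))‖ ≤ M * q ^ n := by
      intro n hn
      rw [norm_mul, Complex.norm_exp]
      have hre : (-(2 * (Real.pi:ℂ) * (n:ℂ) * Complex.I * ((τh:ℝ):ℂ))).re = 0 := by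
        simp [Complex.mul_re, Complex.mul_im]
      rw [hre, Real.exp_zero, mul_one]
      exact hgnq n (Finset.mem_Icc.1 hn).1
    calc ‖∑ n ∈ Finset.Icc 1 N,
          gn n * Complex.exp (-(2 * Real.pi * (n:ℂ) * Complex.I * ((τh:ℝ):ℂ)))‖
        ≤ ∑ n ∈ Finset.Icc 1 N, ‖gn n
          * Complex.exp (-(2 * Real.pi * (n:ℂ) * Complex.I * ((τh:ℝ):ℂ)))‖ :=
          norm_sum_le _ _
      _ ≤ ∑ n ∈ Finset.Icc 1 N, M * q^n := Finset.sum_le_sum hterm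
      _ ≤ 2*M*q := hgeom N
  have hub2 : ∀ N : ℕ, ‖∑ n ∈ Finset.Icc 1 N,
      (starRingEnd ℂ) (gn n)
        * Complex.exp (2 * Real.pi * (n:ℂ) * Complex.I * ((τh:ℝ):ℂ))‖ ≤ 2 * M * q := by
    intro N
    have hterm : ∀ n ∈ Finset.Icc 1 N, ‖(starRingEnd ℂ) (gn n)
        * Complex.exp (2 * Real.pi * (n:ℂ) * Complex.I * ((τh:ℝ):ℂ))‖ ≤ M * q ^ n := by
      intro n hn
      rw [norm_mul, Complex.norm_exp, Complex.norm_conj]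
      have hre : ((2 * (Real.pi:ℂ) * (n:ℂ) * Complex.I * ((τh:ℝ):ℂ))).re = 0 := by
        simp [Complex.mul_re, Complex.mul_im]
      rw [hre, Real.exp_zero, mul_one]
      exact hgnq n (Finset.mem_Icc.1 hn).1
    calc ‖∑ n ∈ Finset.Icc 1 N, (starRingEnd ℂ) (gn n)
          * Complex.exp (2 * Real.pi * (n:ℂ) * Complex.I * ((τh:ℝ):ℂ))‖
        ≤ ∑ n ∈ Finset.Icc 1 N, ‖(starRingEnd ℂ) (gn n)
          * Complex.exp (2 * Real.pi * (n:ℂ) * Complex.I * ((τh:ℝ):ℂ))‖ :=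
          norm_sum_le _ _
      _ ≤ ∑ n ∈ Finset.Icc 1 N, M * q^n := Finset.sum_le_sum hterm
      _ ≤ 2*M*q := hgeom N
  have hS1b : ‖S₁ ((τh:ℝ):ℂ)‖ ≤ 2*M*q :=
    le_of_tendsto ((continuous_norm.tendsto _).comp (hS₁.tendsto_at hτmem))
      (Eventually.of_forall hub1)
  have hS2b : ‖S₂ ((τh:ℝ):ℂ)‖ ≤ 2*M*q :=
    le_of_tendsto ((continuous_norm.tendsto _).comp (hS₂.tendsto_at hτmem))
      (Eventually.of_forall hub2)
  have hgr := hg _ hτmem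
  rw [hzero] at hgr
  have hg0 : g₀ = -(S₁ ((τh:ℝ):ℂ) + S₂ ((τh:ℝ):ℂ)) := by linear_combination -hgr
  calc ‖g₀‖ = ‖S₁ ((τh:ℝ):ℂ) + S₂ ((τh:ℝ):ℂ)‖ := by
        rw [hg0, norm_neg]
    _ ≤ ‖S₁ ((τh:ℝ):ℂ)‖ + ‖S₂ ((τh:ℝ):ℂ)‖ := norm_add_le _ _
    _ ≤ 2*M*q + 2*M*q := add_le_add hS1b hS2b
    _ = 4 * M * q := by ring
end

section
/- Let α, β ≥ 1 and let D = {z ∈ ℂ : |Re z| ≤ α, |Im z| ≤ β} be the closed rectangle. Let g : D → ℂ and let g₀ ∈ ℂ and (g_n)_{n≥1} be complex numbers such that g(τ) = g₀ + ∑_{n≥1} g_n e^{−2π n i τ} + ∑_{n≥1} conj(g_n) e^{2π n i τ} for all τ ∈ D, with both series converging uniformly on D, and suppose there exists a real τ_h ∈ [−α, α] with g(τ_h) = 0. Then for every real τ ∈ [−α, α] one has |g(τ)| ≤ 8 ‖g‖_D e^{−2π β}. -/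
open Filter Topology

open intervalIntegral in
lemma aux_int (k : ℤ) : (∫ t in (0:ℝ)..1,
    Complex.exp (2*(Real.pi:ℂ)*(k:ℂ)*Complex.I*(t:ℝ))) = if k = 0 then 1 else 0 := by
  rcases eq_or_ne k 0 with hk | hk
  · simp [hk]
  · have hc : (2*(Real.pi:ℂ)*(k:ℂ)*Complex.I) ≠ 0 := by
      simp [Real.pi_ne_zero, Complex.I_ne_zero, hk, Complex.ofReal_ne_zero]
    have := integral_exp_mul_complex (a := (0:ℝ)) (b := 1) hc
    simp only [mul_assoc] at this ⊢
    rw [this]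
    simp only [Complex.ofReal_one, Complex.ofReal_zero, mul_one, mul_zero, Complex.exp_zero]
    rw [show (2:ℂ)*((Real.pi:ℂ)*((k:ℂ)*Complex.I)) = (k:ℂ)*(2*(Real.pi:ℂ)*Complex.I) by ring,
      Complex.exp_int_mul_two_pi_mul_I]
    simp [hk]

lemma geom_Icc (r : ℝ) (N : ℕ) :
    ∑ m ∈ Finset.Icc 1 N, r^m = r * ∑ i ∈ Finset.range N, r^i := by
  induction N with
  | zero => simp
  | succ N ih =>
    rw [Finset.sum_Icc_succ_top (Nat.one_le_iff_ne_zero.mpr (Nat.succ_ne_zero N)), ih,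
      Finset.sum_range_succ, mul_add, pow_succ']
lemma cont_term (c : ℂ) (a : ℂ) (w : ℂ) : Continuous fun t : ℝ => c * Complex.exp (a * ((t:ℂ) + w)) := by
  fun_prop

lemma coeff_eval (β : ℝ) (g₀ : ℂ) (gn : ℕ → ℂ) (n N : ℕ) (hn : 1 ≤ n) (hN : n ≤ N) :
    (∫ t in (0:ℝ)..1,
      (g₀ + (∑ m ∈ Finset.Icc 1 N, gn m *
            Complex.exp (-(2 * (Real.pi:ℂ) * (m:ℂ) * Complex.I * ((t:ℂ) + (β:ℂ)*Complex.I))))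
          + (∑ m ∈ Finset.Icc 1 N, (starRingEnd ℂ) (gn m) *
            Complex.exp (2 * (Real.pi:ℂ) * (m:ℂ) * Complex.I * ((t:ℂ) + (β:ℂ)*Complex.I))))
        * Complex.exp (2*(Real.pi:ℂ)*(n:ℂ)*Complex.I*(t:ℂ)))
    = gn n * Real.exp (2*Real.pi*β*n) := by
  have hn0 : (n:ℤ) ≠ 0 := by exact_mod_cast Nat.one_le_iff_ne_zero.mp hn
  -- rewrite each term of the A-sum
  have hA : ∀ m : ℕ, ∀ t : ℝ,
      gn m * Complex.exp (-(2 * (Real.pi:ℂ) * (m:ℂ) * Complex.I * ((t:ℂ) + (β:ℂ)*Complex.I)))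
        * Complex.exp (2*(Real.pi:ℂ)*(n:ℂ)*Complex.I*(t:ℂ))
      = (gn m * Complex.exp ((2*Real.pi*β*m : ℝ) : ℂ))
        * Complex.exp (2*(Real.pi:ℂ)*(((n:ℤ) - (m:ℤ) : ℤ):ℂ)*Complex.I*(t:ℂ)) := by
    intro m t
    simp only [mul_assoc, ← Complex.exp_add]
    congr 2
    push_cast
    linear_combination (-(2*(Real.pi:ℂ)*(m:ℂ)*(β:ℂ))) * Complex.I_sq
  have hB : ∀ m : ℕ, ∀ t : ℝ,
      (starRingEnd ℂ) (gn m) * Complex.exp (2 * (Real.pi:ℂ) * (m:ℂ) * Complex.I * ((t:ℂ) + (β:ℂ)*Complex.I))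
        * Complex.exp (2*(Real.pi:ℂ)*(n:ℂ)*Complex.I*(t:ℂ))
      = ((starRingEnd ℂ) (gn m) * Complex.exp ((-(2*Real.pi*β*m) : ℝ) : ℂ))
        * Complex.exp (2*(Real.pi:ℂ)*(((m:ℤ) + (n:ℤ) : ℤ):ℂ)*Complex.I*(t:ℂ)) := by
    intro m t
    simp only [mul_assoc, ← Complex.exp_add]
    congr 2
    push_cast
    linear_combination (2*(Real.pi:ℂ)*(m:ℂ)*(β:ℂ)) * Complex.I_sq
  have int_e : ∀ k : ℤ, IntervalIntegrable
      (fun t : ℝ => Complex.exp (2*(Real.pi:ℂ)*(k:ℂ)*Complex.I*(t:ℂ))) MeasureTheory.volume 0 1 := by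
    intro k
    exact (Continuous.intervalIntegrable (by fun_prop) _ _)
  have int_term : ∀ (c a : ℂ) (w : ℂ), IntervalIntegrable
      (fun t : ℝ => c * Complex.exp (a * ((t:ℂ) + w))) MeasureTheory.volume 0 1 :=
    fun c a w => (cont_term c a w).intervalIntegrable _ _
  -- expand the product
  have expand : ∀ t : ℝ,
      (g₀ + (∑ m ∈ Finset.Icc 1 N, gn m *
            Complex.exp (-(2 * (Real.pi:ℂ) * (m:ℂ) * Complex.I * ((t:ℂ) + (β:ℂ)*Complex.I))))
          + (∑ m ∈ Finset.Icc 1 N, (starRingEnd ℂ) (gn m) *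
            Complex.exp (2 * (Real.pi:ℂ) * (m:ℂ) * Complex.I * ((t:ℂ) + (β:ℂ)*Complex.I))))
        * Complex.exp (2*(Real.pi:ℂ)*(n:ℂ)*Complex.I*(t:ℂ))
      = g₀ * Complex.exp (2*(Real.pi:ℂ)*(((n:ℤ)):ℂ)*Complex.I*(t:ℂ))
        + (∑ m ∈ Finset.Icc 1 N, (gn m * Complex.exp ((2*Real.pi*β*m : ℝ) : ℂ))
            * Complex.exp (2*(Real.pi:ℂ)*(((n:ℤ) - (m:ℤ) : ℤ):ℂ)*Complex.I*(t:ℂ)))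
        + (∑ m ∈ Finset.Icc 1 N, ((starRingEnd ℂ) (gn m) * Complex.exp ((-(2*Real.pi*β*m) : ℝ) : ℂ))
            * Complex.exp (2*(Real.pi:ℂ)*(((m:ℤ) + (n:ℤ) : ℤ):ℂ)*Complex.I*(t:ℂ))) := by
    intro t
    rw [add_mul, add_mul, Finset.sum_mul, Finset.sum_mul]
    push_cast
    congr 1
    · congr 1
      exact Finset.sum_congr rfl fun m _ => by simpa using hA m t
    · exact Finset.sum_congr rfl fun m _ => by simpa using hB m t
  rw [intervalIntegral.integral_congr (g := fun t : ℝ =>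
      g₀ * Complex.exp (2*(Real.pi:ℂ)*(((n:ℤ)):ℂ)*Complex.I*(t:ℂ))
        + (∑ m ∈ Finset.Icc 1 N, (gn m * Complex.exp ((2*Real.pi*β*m : ℝ) : ℂ))
            * Complex.exp (2*(Real.pi:ℂ)*(((n:ℤ) - (m:ℤ) : ℤ):ℂ)*Complex.I*(t:ℂ)))
        + (∑ m ∈ Finset.Icc 1 N, ((starRingEnd ℂ) (gn m) * Complex.exp ((-(2*Real.pi*β*m) : ℝ) : ℂ))
            * Complex.exp (2*(Real.pi:ℂ)*(((m:ℤ) + (n:ℤ) : ℤ):ℂ)*Complex.I*(t:ℂ))))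
      (fun t _ => expand t)]
  have intA : IntervalIntegrable (fun t : ℝ =>
      (∑ m ∈ Finset.Icc 1 N, (gn m * Complex.exp ((2*Real.pi*β*m : ℝ) : ℂ))
        * Complex.exp (2*(Real.pi:ℂ)*(((n:ℤ) - (m:ℤ) : ℤ):ℂ)*Complex.I*(t:ℂ)))) MeasureTheory.volume 0 1 := by
    apply Continuous.intervalIntegrable; fun_prop
  have intB : IntervalIntegrable (fun t : ℝ =>
      (∑ m ∈ Finset.Icc 1 N, ((starRingEnd ℂ) (gn m) * Complex.exp ((-(2*Real.pi*β*m) : ℝ) : ℂ))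
        * Complex.exp (2*(Real.pi:ℂ)*(((m:ℤ) + (n:ℤ) : ℤ):ℂ)*Complex.I*(t:ℂ)))) MeasureTheory.volume 0 1 := by
    apply Continuous.intervalIntegrable; fun_prop
  have int0 : IntervalIntegrable (fun t : ℝ =>
      g₀ * Complex.exp (2*(Real.pi:ℂ)*(((n:ℤ)):ℂ)*Complex.I*(t:ℂ))) MeasureTheory.volume 0 1 := by
    apply Continuous.intervalIntegrable; fun_prop
  rw [intervalIntegral.integral_add (int0.add intA) intB, intervalIntegral.integral_add int0 intA,
    intervalIntegral.integral_finset_sum (fun m _ => by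
      apply Continuous.intervalIntegrable; fun_prop),
    intervalIntegral.integral_finset_sum (fun m _ => by
      apply Continuous.intervalIntegrable; fun_prop)]
  simp only [intervalIntegral.integral_const_mul, aux_int]
  rw [if_neg hn0]
  rw [Finset.sum_eq_single_of_mem n (Finset.mem_Icc.mpr ⟨hn, hN⟩)
      (fun m _ hmn => by rw [if_neg (sub_ne_zero.mpr (by exact_mod_cast (Ne.symm hmn))), mul_zero])]
  rw [Finset.sum_eq_zero (fun m hm => by
      rw [if_neg (by
        have : 1 ≤ m := (Finset.mem_Icc.mp hm).1
        omega), mul_zero])]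
  rw [sub_self, if_pos rfl, mul_one]
  rw [Complex.ofReal_exp, mul_zero, zero_add, add_zero]

/-- A 1-periodic analytic function on a rectangle which vanishes at a real point
is exponentially small in the height `β` of the rectangle on the whole real
segment: `|g(τ)| ≤ 8 ‖g‖_D e^{−2πβ}` for all real `τ ∈ [−α, α]`. -/
theorem periodic_function_real_bound (α β : ℝ) (hα : 1 ≤ α) (hβ : 1 ≤ β)
    (g : ℂ → ℂ) (g₀ : ℂ) (gn : ℕ → ℂ) (S₁ S₂ : ℂ → ℂ)
    (hS₁ : TendstoUniformlyOn
      (fun N : ℕ => fun τ : ℂ => ∑ n ∈ Finset.Icc 1 N,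
        gn n * Complex.exp (-(2 * Real.pi * (n : ℂ) * Complex.I * τ)))
      S₁ atTop (rect α β))
    (hS₂ : TendstoUniformlyOn
      (fun N : ℕ => fun τ : ℂ => ∑ n ∈ Finset.Icc 1 N,
        (starRingEnd ℂ) (gn n) * Complex.exp (2 * Real.pi * (n : ℂ) * Complex.I * τ))
      S₂ atTop (rect α β))
    (hg : ∀ τ ∈ rect α β, g τ = g₀ + S₁ τ + S₂ τ)
    (hzero : ∃ τh : ℝ, τh ∈ Set.Icc (-α) α ∧ g (τh : ℂ) = 0) :
    ∀ τ : ℝ, τ ∈ Set.Icc (-α) α →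
      ‖g (τ : ℂ)‖ ≤
        8 * (⨆ w ∈ rect α β, ‖g w‖) * Real.exp (-(2 * Real.pi * β)) := by
  obtain ⟨τh, hτh, hgτh0⟩ := hzero
  have hβ0 : (0:ℝ) < β := lt_of_lt_of_le one_pos hβ
  have hmemR : ∀ t : ℝ, t ∈ Set.Icc (-α) α → (t : ℂ) ∈ rect α β := by
    intro t ht
    refine ⟨?_, ?_⟩
    · simpa [Complex.ofReal_re] using abs_le.mpr ⟨ht.1, ht.2⟩
    · simp [Complex.ofReal_im]; linarith
  have hmemS : ∀ t : ℝ, t ∈ Set.uIcc (0:ℝ) 1 → ((t : ℂ) + (β:ℂ) * Complex.I) ∈ rect α β := by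
    intro t ht
    rw [Set.uIcc_of_le zero_le_one] at ht
    refine ⟨?_, ?_⟩
    · simp only [Complex.add_re, Complex.ofReal_re, Complex.mul_re, Complex.I_re, Complex.I_im,
        Complex.ofReal_im, mul_zero, mul_one, zero_sub, neg_zero, add_zero, zero_mul, sub_zero]
      rw [abs_of_nonneg ht.1]; linarith [ht.2]
    · simp only [Complex.add_im, Complex.ofReal_im, Complex.mul_im, Complex.I_im, Complex.I_re,
        Complex.ofReal_re, mul_one, mul_zero, zero_add, add_zero, zero_mul]
      rw [abs_of_pos hβ0]
  have hrc : IsCompact (rect α β) := by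
    apply Metric.isCompact_of_isClosed_isBounded
    · exact (isClosed_Iic.preimage (continuous_abs.comp Complex.continuous_re)).inter
        (isClosed_Iic.preimage (continuous_abs.comp Complex.continuous_im))
    · apply (Metric.isBounded_closedBall (x := (0:ℂ)) (r := α + β)).subset
      intro z hz
      simp only [Metric.mem_closedBall, dist_zero_right]
      exact (Complex.norm_le_abs_re_add_abs_im z).trans (add_le_add hz.1 hz.2)
  have h0 : (0:ℂ) ∈ rect α β := ⟨by simp; linarith, by simp; linarith⟩
  have hAcont : ∀ N : ℕ, Continuous (fun τ : ℂ => ∑ n ∈ Finset.Icc 1 N,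
      gn n * Complex.exp (-(2 * Real.pi * (n : ℂ) * Complex.I * τ))) := by
    intro N
    exact continuous_finset_sum _ fun m _ =>
      continuous_const.mul (Complex.continuous_exp.comp (by fun_prop))
  have hBcont : ∀ N : ℕ, Continuous (fun τ : ℂ => ∑ n ∈ Finset.Icc 1 N,
      (starRingEnd ℂ) (gn n) * Complex.exp (2 * Real.pi * (n : ℂ) * Complex.I * τ)) := by
    intro N
    exact continuous_finset_sum _ fun m _ =>
      continuous_const.mul (Complex.continuous_exp.comp (by fun_prop))
  have hgcont : ContinuousOn g (rect α β) := by
    have c1 : ContinuousOn S₁ (rect α β) :=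
      hS₁.continuousOn (Eventually.of_forall fun N => (hAcont N).continuousOn).frequently
    have c2 : ContinuousOn S₂ (rect α β) :=
      hS₂.continuousOn (Eventually.of_forall fun N => (hBcont N).continuousOn).frequently
    exact ((continuousOn_const.add c1).add c2).congr fun x hx => hg x hx
  set M := ⨆ w ∈ rect α β, ‖g w‖ with hMdef
  obtain ⟨x₀, hx₀, hC⟩ := hrc.exists_isMaxOn ⟨0, h0⟩
    (continuous_norm.comp_continuousOn hgcont)
  have hbdd : BddAbove (Set.range fun w : ℂ => ⨆ _ : w ∈ rect α β, ‖g w‖) := by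
    refine ⟨‖g x₀‖ ⊔ 0, ?_⟩
    rintro y ⟨w, rfl⟩
    simp only []
    by_cases hw : w ∈ rect α β
    · haveI : Nonempty (w ∈ rect α β) := ⟨hw⟩
      rw [show (⨆ _ : w ∈ rect α β, ‖g w‖) = ‖g w‖ from ciSup_const]
      exact le_sup_of_le_left (hC hw)
    · haveI : IsEmpty (w ∈ rect α β) := ⟨hw⟩
      rw [show (⨆ _ : w ∈ rect α β, ‖g w‖) = 0 from Real.iSup_of_isEmpty _]
      exact le_sup_right
  have hM : ∀ w ∈ rect α β, ‖g w‖ ≤ M := by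
    intro w hw
    have h2 := le_ciSup hbdd w
    haveI : Nonempty (w ∈ rect α β) := ⟨hw⟩
    rwa [show (⨆ _ : w ∈ rect α β, ‖g w‖) = ‖g w‖ from ciSup_const] at h2
  have hM0 : 0 ≤ M := (norm_nonneg _).trans (hM 0 h0)
  -- coefficient bound
  have hgn : ∀ n : ℕ, 1 ≤ n → ‖gn n‖ * Real.exp (2*Real.pi*β*n) ≤ M := by
    intro n hn
    have habse : ∀ t : ℝ, ‖Complex.exp (2*(Real.pi:ℂ)*(n:ℂ)*Complex.I*(t:ℂ))‖ = 1 := by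
      intro t
      rw [Complex.norm_exp]
      norm_num [Complex.mul_re, Complex.mul_im]
    have hgint : IntervalIntegrable (fun t : ℝ => g ((t:ℂ) + (β:ℂ)*Complex.I) *
        Complex.exp (2*(Real.pi:ℂ)*(n:ℂ)*Complex.I*(t:ℂ))) MeasureTheory.volume 0 1 := by
      apply ContinuousOn.intervalIntegrable
      apply ContinuousOn.mul
      · exact hgcont.comp (Continuous.continuousOn (by fun_prop)) (fun t ht => hmemS t ht)
      · exact Continuous.continuousOn (by fun_prop)
    have hJ : ‖∫ t in (0:ℝ)..1, g ((t:ℂ) + (β:ℂ)*Complex.I) *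
        Complex.exp (2*(Real.pi:ℂ)*(n:ℂ)*Complex.I*(t:ℂ))‖ ≤ M := by
      have hb := intervalIntegral.norm_integral_le_of_norm_le_const (C := M) (a := (0:ℝ)) (b := 1)
        (f := fun t : ℝ => g ((t:ℂ)+(β:ℂ)*Complex.I) *
          Complex.exp (2*(Real.pi:ℂ)*(n:ℂ)*Complex.I*(t:ℂ))) ?_
      · simpa using hb
      · intro t ht
        rw [Set.uIoc_of_le zero_le_one] at ht
        have ht' : t ∈ Set.uIcc (0:ℝ) 1 := by
          rw [Set.uIcc_of_le zero_le_one]; exact Set.Ioc_subset_Icc_self ht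
        rw [norm_mul, habse t, mul_one]
        exact hM _ (hmemS t ht')
    refine le_of_forall_pos_le_add ?_
    intro ε hε
    have h1 := (Metric.tendstoUniformlyOn_iff.mp hS₁) (ε/2) (by positivity)
    have h2 := (Metric.tendstoUniformlyOn_iff.mp hS₂) (ε/2) (by positivity)
    obtain ⟨N, hh, hNn⟩ := ((h1.and h2).and (eventually_ge_atTop n)).exists
    obtain ⟨hN1, hN2⟩ := hh
    have hPeval := coeff_eval β g₀ gn n N hn hNn
    have hPint : IntervalIntegrable (fun t : ℝ =>
        (g₀ + (∑ m ∈ Finset.Icc 1 N, gn m *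
            Complex.exp (-(2 * (Real.pi:ℂ) * (m:ℂ) * Complex.I * ((t:ℂ) + (β:ℂ)*Complex.I))))
          + (∑ m ∈ Finset.Icc 1 N, (starRingEnd ℂ) (gn m) *
            Complex.exp (2 * (Real.pi:ℂ) * (m:ℂ) * Complex.I * ((t:ℂ) + (β:ℂ)*Complex.I))))
        * Complex.exp (2*(Real.pi:ℂ)*(n:ℂ)*Complex.I*(t:ℂ))) MeasureTheory.volume 0 1 := by
      apply Continuous.intervalIntegrable
      apply Continuous.mul _ (by fun_prop)
      apply (continuous_const.add ?_).add ?_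
      · exact ((hAcont N).comp (by fun_prop : Continuous fun t : ℝ => (t:ℂ) + (β:ℂ)*Complex.I))
      · exact ((hBcont N).comp (by fun_prop : Continuous fun t : ℝ => (t:ℂ) + (β:ℂ)*Complex.I))
    have hdiff : ‖(∫ t in (0:ℝ)..1,
        (g₀ + (∑ m ∈ Finset.Icc 1 N, gn m *
            Complex.exp (-(2 * (Real.pi:ℂ) * (m:ℂ) * Complex.I * ((t:ℂ) + (β:ℂ)*Complex.I))))
          + (∑ m ∈ Finset.Icc 1 N, (starRingEnd ℂ) (gn m) *
            Complex.exp (2 * (Real.pi:ℂ) * (m:ℂ) * Complex.I * ((t:ℂ) + (β:ℂ)*Complex.I))))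
        * Complex.exp (2*(Real.pi:ℂ)*(n:ℂ)*Complex.I*(t:ℂ)))
        - (∫ t in (0:ℝ)..1, g ((t:ℂ) + (β:ℂ)*Complex.I) *
            Complex.exp (2*(Real.pi:ℂ)*(n:ℂ)*Complex.I*(t:ℂ)))‖ ≤ ε := by
      rw [← intervalIntegral.integral_sub hPint hgint]
      refine le_trans (intervalIntegral.norm_integral_le_of_norm_le_const (C := ε) ?_)
        (by norm_num)
      intro t ht
      rw [Set.uIoc_of_le zero_le_one] at ht
      have ht' : t ∈ Set.uIcc (0:ℝ) 1 := by
        rw [Set.uIcc_of_le zero_le_one]; exact Set.Ioc_subset_Icc_self ht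
      have hx := hmemS t ht'
      set x := (t:ℂ) + (β:ℂ)*Complex.I
      rw [← sub_mul, norm_mul, habse t, mul_one]
      have hgx := hg x hx
      have heq : (g₀ + (∑ m ∈ Finset.Icc 1 N, gn m *
            Complex.exp (-(2 * (Real.pi:ℂ) * (m:ℂ) * Complex.I * x)))
          + (∑ m ∈ Finset.Icc 1 N, (starRingEnd ℂ) (gn m) *
            Complex.exp (2 * (Real.pi:ℂ) * (m:ℂ) * Complex.I * x))) - g x
          = ((∑ m ∈ Finset.Icc 1 N, gn m *
            Complex.exp (-(2 * (Real.pi:ℂ) * (m:ℂ) * Complex.I * x))) - S₁ x)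
          + ((∑ m ∈ Finset.Icc 1 N, (starRingEnd ℂ) (gn m) *
            Complex.exp (2 * (Real.pi:ℂ) * (m:ℂ) * Complex.I * x)) - S₂ x) := by
        rw [hgx]; ring
      rw [heq]
      have d1 := hN1 x hx
      have d2 := hN2 x hx
      rw [dist_eq_norm] at d1 d2
      calc ‖_‖ ≤ _ := norm_add_le _ _
        _ ≤ ε/2 + ε/2 := by
          apply add_le_add
          · rw [← norm_neg, neg_sub]; exact d1.le
          · rw [← norm_neg, neg_sub]; exact d2.le
        _ = ε := by ring
    set JP := (∫ t in (0:ℝ)..1,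
        (g₀ + (∑ m ∈ Finset.Icc 1 N, gn m *
            Complex.exp (-(2 * (Real.pi:ℂ) * (m:ℂ) * Complex.I * ((t:ℂ) + (β:ℂ)*Complex.I))))
          + (∑ m ∈ Finset.Icc 1 N, (starRingEnd ℂ) (gn m) *
            Complex.exp (2 * (Real.pi:ℂ) * (m:ℂ) * Complex.I * ((t:ℂ) + (β:ℂ)*Complex.I))))
        * Complex.exp (2*(Real.pi:ℂ)*(n:ℂ)*Complex.I*(t:ℂ))) with hJPdef
    set JG := (∫ t in (0:ℝ)..1, g ((t:ℂ) + (β:ℂ)*Complex.I) *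
        Complex.exp (2*(Real.pi:ℂ)*(n:ℂ)*Complex.I*(t:ℂ))) with hJGdef
    have hfin : ‖JP‖ ≤ ε + M :=
      le_trans (by simpa using norm_sub_le_norm_sub_add_norm_sub JP JG 0) (add_le_add hdiff hJ)
    rw [hPeval, norm_mul, Complex.norm_real, Real.norm_eq_abs, abs_of_pos (Real.exp_pos _)] at hfin
    linarith
  -- geometric bound on coefficients
  have hgn' : ∀ m : ℕ, 1 ≤ m → ‖gn m‖ ≤ M * Real.exp (-(2*Real.pi*β)) ^ m := by
    intro m hm
    have h := hgn m hm
    have hepos := Real.exp_pos (2*Real.pi*β*m)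
    rw [← Real.exp_nat_mul]
    have hrw : Real.exp ((m:ℝ) * (-(2*Real.pi*β))) = (Real.exp (2*Real.pi*β*m))⁻¹ := by
      rw [← Real.exp_neg]; ring_nf
    rw [hrw]
    calc ‖gn m‖
        = ‖gn m‖ * Real.exp (2*Real.pi*β*m) * (Real.exp (2*Real.pi*β*m))⁻¹ := by
          field_simp
      _ ≤ M * (Real.exp (2*Real.pi*β*m))⁻¹ :=
          mul_le_mul_of_nonneg_right h (inv_nonneg.mpr hepos.le)
  -- sum of coefficients bound
  have hr0 : (0:ℝ) < Real.exp (-(2*Real.pi*β)) := Real.exp_pos _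
  have hr2 : Real.exp (-(2*Real.pi*β)) ≤ 1/2 := by
    have h1 : Real.exp (-(2*Real.pi*β)) ≤ Real.exp (-1) :=
      Real.exp_le_exp.mpr (by nlinarith [Real.pi_gt_three])
    have h2 : Real.exp (-1) ≤ 1/2 := by
      rw [Real.exp_neg]
      have he2 : (2:ℝ) ≤ Real.exp 1 := by
        have := Real.add_one_le_exp 1
        linarith
      calc (Real.exp 1)⁻¹ ≤ (2:ℝ)⁻¹ := by
            apply inv_anti₀ (by norm_num) he2
        _ = 1/2 := by norm_num
    linarith
  have hsum : ∀ N : ℕ, ∑ m ∈ Finset.Icc 1 N, ‖gn m‖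
      ≤ 2 * M * Real.exp (-(2*Real.pi*β)) := by
    intro N
    set r := Real.exp (-(2*Real.pi*β)) with hrdef
    have hgeo : ∑ i ∈ Finset.range N, r^i ≤ 2 := by
      have hs : Summable (fun i : ℕ => r^i) :=
        summable_geometric_of_lt_one hr0.le (by linarith)
      calc ∑ i ∈ Finset.range N, r^i
          ≤ ∑' i : ℕ, r^i := Summable.sum_le_tsum _ (fun i _ => pow_nonneg hr0.le i) hs
        _ = (1-r)⁻¹ := tsum_geometric_of_lt_one hr0.le (by linarith)
        _ ≤ 2 := by
            have h12 : (1/2:ℝ) ≤ 1 - r := by linarith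
            calc (1-r)⁻¹ ≤ ((1:ℝ)/2)⁻¹ := inv_anti₀ (by norm_num) h12
              _ = 2 := by norm_num
    calc ∑ m ∈ Finset.Icc 1 N, ‖gn m‖
        ≤ ∑ m ∈ Finset.Icc 1 N, M * r^m :=
          Finset.sum_le_sum (fun m hm => hgn' m (Finset.mem_Icc.mp hm).1)
      _ = M * (r * ∑ i ∈ Finset.range N, r^i) := by
          rw [← Finset.mul_sum, geom_Icc]
      _ ≤ M * (r * 2) :=
          mul_le_mul_of_nonneg_left (mul_le_mul_of_nonneg_left hgeo hr0.le) hM0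
      _ = 2 * M * r := by ring
  -- final argument
  intro τ hτ
  have hτr := hmemR τ hτ
  have hτhr := hmemR τh hτh
  have h1 : Tendsto (fun N : ℕ => g₀ + (∑ m ∈ Finset.Icc 1 N, gn m *
        Complex.exp (-(2 * (Real.pi:ℂ) * (m:ℂ) * Complex.I * (τ:ℂ))))
      + (∑ m ∈ Finset.Icc 1 N, (starRingEnd ℂ) (gn m) *
        Complex.exp (2 * (Real.pi:ℂ) * (m:ℂ) * Complex.I * (τ:ℂ)))) atTop (𝓝 (g (τ:ℂ))) := by
    rw [hg (τ:ℂ) hτr]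
    exact (tendsto_const_nhds.add (hS₁.tendsto_at hτr)).add (hS₂.tendsto_at hτr)
  have h2 : Tendsto (fun N : ℕ => g₀ + (∑ m ∈ Finset.Icc 1 N, gn m *
        Complex.exp (-(2 * (Real.pi:ℂ) * (m:ℂ) * Complex.I * (τh:ℂ))))
      + (∑ m ∈ Finset.Icc 1 N, (starRingEnd ℂ) (gn m) *
        Complex.exp (2 * (Real.pi:ℂ) * (m:ℂ) * Complex.I * (τh:ℂ)))) atTop (𝓝 (g (τh:ℂ))) := by
    rw [hg (τh:ℂ) hτhr]
    exact (tendsto_const_nhds.add (hS₁.tendsto_at hτhr)).add (hS₂.tendsto_at hτhr)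
  have habs : Tendsto (fun N : ℕ => ‖
      (g₀ + (∑ m ∈ Finset.Icc 1 N, gn m *
          Complex.exp (-(2 * (Real.pi:ℂ) * (m:ℂ) * Complex.I * (τ:ℂ))))
        + (∑ m ∈ Finset.Icc 1 N, (starRingEnd ℂ) (gn m) *
          Complex.exp (2 * (Real.pi:ℂ) * (m:ℂ) * Complex.I * (τ:ℂ))))
      - (g₀ + (∑ m ∈ Finset.Icc 1 N, gn m *
          Complex.exp (-(2 * (Real.pi:ℂ) * (m:ℂ) * Complex.I * (τh:ℂ))))
        + (∑ m ∈ Finset.Icc 1 N, (starRingEnd ℂ) (gn m) *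
          Complex.exp (2 * (Real.pi:ℂ) * (m:ℂ) * Complex.I * (τh:ℂ))))‖)
      atTop (𝓝 (‖g (τ:ℂ) - g (τh:ℂ)‖)) :=
    (continuous_norm.tendsto _).comp (h1.sub h2)
  rw [hgτh0, sub_zero] at habs
  refine le_of_tendsto habs (Eventually.of_forall ?_)
  intro N
  have habse1 : ∀ (m : ℕ) (t : ℝ),
      ‖Complex.exp (-(2 * (Real.pi:ℂ) * (m:ℂ) * Complex.I * (t:ℂ)))‖ = 1 := by
    intro m t
    rw [Complex.norm_exp]
    norm_num [Complex.mul_re, Complex.mul_im]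
  have habse2 : ∀ (m : ℕ) (t : ℝ),
      ‖Complex.exp (2 * (Real.pi:ℂ) * (m:ℂ) * Complex.I * (t:ℂ))‖ = 1 := by
    intro m t
    rw [Complex.norm_exp]
    norm_num [Complex.mul_re, Complex.mul_im]
  have heq : (g₀ + (∑ m ∈ Finset.Icc 1 N, gn m *
          Complex.exp (-(2 * (Real.pi:ℂ) * (m:ℂ) * Complex.I * (τ:ℂ))))
        + (∑ m ∈ Finset.Icc 1 N, (starRingEnd ℂ) (gn m) *
          Complex.exp (2 * (Real.pi:ℂ) * (m:ℂ) * Complex.I * (τ:ℂ))))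
      - (g₀ + (∑ m ∈ Finset.Icc 1 N, gn m *
          Complex.exp (-(2 * (Real.pi:ℂ) * (m:ℂ) * Complex.I * (τh:ℂ))))
        + (∑ m ∈ Finset.Icc 1 N, (starRingEnd ℂ) (gn m) *
          Complex.exp (2 * (Real.pi:ℂ) * (m:ℂ) * Complex.I * (τh:ℂ))))
      = (∑ m ∈ Finset.Icc 1 N, gn m *
          (Complex.exp (-(2 * (Real.pi:ℂ) * (m:ℂ) * Complex.I * (τ:ℂ)))
            - Complex.exp (-(2 * (Real.pi:ℂ) * (m:ℂ) * Complex.I * (τh:ℂ)))))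
      + (∑ m ∈ Finset.Icc 1 N, (starRingEnd ℂ) (gn m) *
          (Complex.exp (2 * (Real.pi:ℂ) * (m:ℂ) * Complex.I * (τ:ℂ))
            - Complex.exp (2 * (Real.pi:ℂ) * (m:ℂ) * Complex.I * (τh:ℂ)))) := by
    simp only [mul_sub, Finset.sum_sub_distrib]
    ring
  rw [heq]
  have hb1 : ‖∑ m ∈ Finset.Icc 1 N, gn m *
      (Complex.exp (-(2 * (Real.pi:ℂ) * (m:ℂ) * Complex.I * (τ:ℂ)))
        - Complex.exp (-(2 * (Real.pi:ℂ) * (m:ℂ) * Complex.I * (τh:ℂ))))‖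
      ≤ ∑ m ∈ Finset.Icc 1 N, 2 * ‖gn m‖ := by
    refine (norm_sum_le _ _).trans (Finset.sum_le_sum fun m _ => ?_)
    rw [norm_mul]
    rw [mul_comm (2:ℝ)]
    apply mul_le_mul_of_nonneg_left _ (norm_nonneg _)
    calc ‖_‖ ≤ _ := norm_sub_le _ _
      _ ≤ 2 := by rw [habse1 m τ, habse1 m τh]; norm_num
  have hb2 : ‖∑ m ∈ Finset.Icc 1 N, (starRingEnd ℂ) (gn m) *
      (Complex.exp (2 * (Real.pi:ℂ) * (m:ℂ) * Complex.I * (τ:ℂ))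
        - Complex.exp (2 * (Real.pi:ℂ) * (m:ℂ) * Complex.I * (τh:ℂ)))‖
      ≤ ∑ m ∈ Finset.Icc 1 N, 2 * ‖gn m‖ := by
    refine (norm_sum_le _ _).trans (Finset.sum_le_sum fun m _ => ?_)
    rw [norm_mul, Complex.norm_conj]
    rw [mul_comm (2:ℝ)]
    apply mul_le_mul_of_nonneg_left _ (norm_nonneg _)
    calc ‖_‖ ≤ _ := norm_sub_le _ _
      _ ≤ 2 := by rw [habse2 m τ, habse2 m τh]; norm_num
  have hstot : ∑ m ∈ Finset.Icc 1 N, 2 * ‖gn m‖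
      ≤ 2 * (2 * M * Real.exp (-(2*Real.pi*β))) := by
    rw [← Finset.mul_sum]
    have := hsum N
    linarith
  calc ‖_‖ ≤ _ := norm_add_le _ _
    _ ≤ 2 * (2 * M * Real.exp (-(2*Real.pi*β))) + 2 * (2 * M * Real.exp (-(2*Real.pi*β))) :=
        add_le_add (hb1.trans hstot) (hb2.trans hstot)
    _ ≤ 8 * M * Real.exp (-(2 * Real.pi * β)) := by linarith
end
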